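/- Let (T, η, μ) be a monad on the category of sets which preserves weak pullbacks and is strictly positive. Then for every set X and every natural number k, the k-fold T-image of the strict positivity square is a pullback: for all τ ∈ T^{k+2}X and u ∈ T^{k}X, if (T^{k}μ_X)(τ) = (T^{k}η_X)(u), then τ = (T^{k}(η_{TX} ∘ η_X))(u). Consequently, for a weakly cartesian strictly positive monad, the bar construction of any T-algebra is both inner span complete and split. -/

import Mathlib

open CategoryTheory

universe u

/-- Iterated application of (the functor part of) a monad on `Set`. -/
def Tpow (T : CategoryTheory.Monad (Type u)) : ℕ → Type u → Type u
  | 0, X => X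
  | k + 1, X => T.obj (Tpow T k X)

/-- Iterated application of the monad functor to a function. -/
def TpowMap (T : CategoryTheory.Monad (Type u)) :
    (k : ℕ) → {X Y : Type u} → (X → Y) → Tpow T k X → Tpow T k Y
  | 0, _, _, f => f
  | k + 1, _, _, f => T.map (TypeCat.ofHom (TpowMap T k f))

theorem TpowMap_comp (T : CategoryTheory.Monad (Type u)) (k : ℕ) {X Y Z : Type u}
    (f : X → Y) (g : Y → Z) (x : Tpow T k X) :
    TpowMap T k (fun a => g (f a)) x = TpowMap T k g (TpowMap T k f x) := by
  induction k generalizing X Y Z with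
  | zero => rfl
  | succ k ih =>
    show T.map (TypeCat.ofHom _) x = T.map (TypeCat.ofHom _) (T.map (TypeCat.ofHom _) x)
    have h1 : TpowMap T k (fun a => g (f a)) = fun a => TpowMap T k g (TpowMap T k f a) := by
      funext a; exact ih f g a
    rw [h1]
    exact ConcreteCategory.congr_hom (T.map_comp (TypeCat.ofHom (TpowMap T k f)) (TypeCat.ofHom (TpowMap T k g))) x

/-- For a strictly positive monad on `Set` whose functor preserves weak pullbacks,
every `k`-fold `T`-image of the strict positivity square is a pullback: if
`(T^k μ)(τ) = (T^k η)(u)` then `τ = (T^k (η ∘ η))(u)`. Consequently the bar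
construction of any algebra of a weakly cartesian strictly positive monad is
inner span complete and split. -/
theorem strictly_positive_powers_pullback
    (T : CategoryTheory.Monad (Type u))
    (hT : ∀ {A B C D : Type u} (f : A → B) (g : A → C) (m : B → D) (n : C → D),
      (∀ a, m (f a) = n (g a)) →
      (∀ (b : B) (c : C), m b = n c → ∃ a : A, f a = b ∧ g a = c) →
      ∀ (b : T.obj B) (c : T.obj C), T.map (TypeCat.ofHom m) b = T.map (TypeCat.ofHom n) c →
        ∃ a : T.obj A, T.map (TypeCat.ofHom f) a = b ∧ T.map (TypeCat.ofHom g) a = c)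
    (hpos : ∀ (X : Type u) (x : X) (τ : T.obj (T.obj X)),
      T.μ.app X τ = T.η.app X x → τ = T.η.app (T.obj X) (T.η.app X x)) :
    ∀ (k : ℕ) (X : Type u) (τ : Tpow T k (T.obj (T.obj X))) (u : Tpow T k X),
      TpowMap T k (T.μ.app X) τ = TpowMap T k (T.η.app X) u →
      τ = TpowMap T k (fun x => T.η.app (T.obj X) (T.η.app X x)) u := by
  intro k
  induction k with
  | zero => intro X τ u h; exact hpos X u τ h
  | succ k ih =>
    intro X τ u h
    have hcomm : ∀ a : Tpow T k X,
        TpowMap T k (T.μ.app X) (TpowMap T k (fun x => T.η.app (T.obj X) (T.η.app X x)) a)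
          = TpowMap T k (T.η.app X) (id a) := by
      intro a
      rw [← TpowMap_comp]
      have : (fun x => T.μ.app X (T.η.app (T.obj X) (T.η.app X x))) = T.η.app X := by
        funext x
        exact ConcreteCategory.congr_hom (T.left_unit X) (T.η.app X x)
      simp only [this]; rfl
    have hpb : ∀ (b : Tpow T k (T.obj (T.obj X))) (c : Tpow T k X),
        TpowMap T k (T.μ.app X) b = TpowMap T k (T.η.app X) c →
        ∃ a : Tpow T k X,
          TpowMap T k (fun x => T.η.app (T.obj X) (T.η.app X x)) a = b ∧ id a = c := by
      intro b c hbc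
      exact ⟨c, (ih X b c hbc).symm, rfl⟩
    obtain ⟨a, ha1, ha2⟩ := hT (TpowMap T k (fun x => T.η.app (T.obj X) (T.η.app X x)))
      id (TpowMap T k (T.μ.app X)) (TpowMap T k (T.η.app X)) hcomm hpb τ u h
    have ha2' : a = u := by
      have hm : T.map (TypeCat.ofHom (id : Tpow T k X → Tpow T k X)) a = a := ConcreteCategory.congr_hom (T.map_id (Tpow T k X)) a
      exact hm.symm.trans ha2
    subst ha2' 
    exact ha1.symm
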